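/- Lemma 1 (boundedness of optimal coefficients implies width equality): For K ⊆ X, if c_n(K) < ∞ then c_n(K) = d_n(K). -/

import Mathlib

open Metric Set Filter
open scoped ENNReal

variable {X : Type*} [NormedAddCommGroup X] [NormedSpace ℝ X]

/-- `co_n(S)`: convex-type combinations of `n` elements of `S` with ℓ¹ norm of
coefficients at most 1. -/
def convComb (n : ℕ) (S : Set X) : Set X :=
  {x | ∃ (l : Fin n → ℝ) (s : Fin n → X),
    (∑ i, |l i|) ≤ 1 ∧ (∀ i, s i ∈ S) ∧ x = ∑ i, l i • s i}

/-- `c̄o(S)`: elements approximable by `co_n(S)` as `n → ∞`. -/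
def cobar (S : Set X) : Set X :=
  {f | Tendsto (fun n => infDist f (convComb n S)) atTop (nhds 0)}

/-- The convex `n`-width of `K`. -/
noncomputable def cwidth (n : ℕ) (K : Set X) : ℝ≥0∞ :=
  ⨅ φ : Fin n → X, ⨆ f ∈ K, EMetric.infEdist f (convComb n (Set.range φ))

/-- Minimal `ε`-covering number of `S` by points of `X` (∞ if none exists). -/
noncomputable def coverN (ε : ℝ) (S : Set X) : ℕ∞ :=
  ⨅ (T : Finset X) (_ : ∀ s ∈ S, ∃ t ∈ T, dist s t ≤ ε), (T.card : ℕ∞)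

/-- `N_co(ε, K)`: minimal covering number of a set whose `c̄o` contains `K`. -/
noncomputable def Ncov (ε : ℝ) (K : Set X) : ℕ∞ :=
  ⨅ (S : Set X) (_ : K ⊆ cobar S), coverN ε S

/-- The Kolmogorov `n`-width of `K`. -/
noncomputable def kwidth (n : ℕ) (K : Set X) : ℝ≥0∞ :=
  ⨅ φ : Fin n → X, ⨆ f ∈ K,
    EMetric.infEdist f ((Submodule.span ℝ (Set.range φ) : Submodule ℝ X) : Set X)

lemma coeff_bound {n : ℕ} (φ : Fin n → X) :
    ∃ C : ℝ, 0 ≤ C ∧ ∀ g ∈ Submodule.span ℝ (Set.range φ), ∃ μ : Fin n → ℝ,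
      (∑ i, μ i • φ i) = g ∧ (∑ i, |μ i|) ≤ C * ‖g‖ := by
  set T := Fintype.linearCombination ℝ φ with hT
  have hrange : LinearMap.range T = Submodule.span ℝ (Set.range φ) :=
    Fintype.range_linearCombination ℝ φ
  obtain ⟨S, hS⟩ := T.rangeRestrict.exists_rightInverse_of_surjective
    (LinearMap.range_eq_top.2 T.surjective_rangeRestrict)
  haveI : FiniteDimensional ℝ (LinearMap.range T) := inferInstance
  let S' := LinearMap.toContinuousLinearMap S
  refine ⟨n * ‖S'‖, by positivity, fun g hg => ?_⟩
  set gV : LinearMap.range T := ⟨g, hrange ▸ hg⟩ with hgV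
  set μ := S gV with hμ
  have hTμ : T μ = g := by
    have := LinearMap.ext_iff.mp hS gV
    simpa [hμ] using congrArg Subtype.val this
  refine ⟨μ, hTμ, ?_⟩
  have h1 : ∀ i, |μ i| ≤ ‖μ‖ := fun i => by
    simpa [Real.norm_eq_abs] using norm_le_pi_norm μ i
  have h2 : ‖μ‖ ≤ ‖S'‖ * ‖g‖ := by
    have := S'.le_opNorm gV
    exact this
  calc (∑ i, |μ i|) ≤ ∑ _i : Fin n, ‖μ‖ := Finset.sum_le_sum fun i _ => h1 i
    _ = n * ‖μ‖ := by simp [Finset.sum_const, mul_comm]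
    _ ≤ n * (‖S'‖ * ‖g‖) := mul_le_mul_of_nonneg_left h2 (by positivity)
    _ = n * ‖S'‖ * ‖g‖ := by ring

lemma K_bounded {n : ℕ} (K : Set X) (h : cwidth n K < ⊤) :
    ∃ B : ℝ, 0 ≤ B ∧ ∀ f ∈ K, ‖f‖ ≤ B := by
  obtain ⟨φ₀, hφ₀⟩ : ∃ φ₀ : Fin n → X,
      (⨆ f ∈ K, EMetric.infEdist f (convComb n (Set.range φ₀))) < ⊤ := iInf_lt_iff.mp h
  set C := ⨆ f ∈ K, EMetric.infEdist f (convComb n (Set.range φ₀)) with hC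
  set R := ∑ i, ‖φ₀ i‖ with hR
  have hR0 : 0 ≤ R := Finset.sum_nonneg fun i _ => norm_nonneg _
  have hbd : ∀ x ∈ convComb n (Set.range φ₀), ‖x‖ ≤ R := by
    rintro x ⟨l, s, hl, hs, rfl⟩
    calc ‖∑ i, l i • s i‖ ≤ ∑ i, ‖l i • s i‖ := norm_sum_le _ _
      _ ≤ ∑ i, |l i| * R := by
          refine Finset.sum_le_sum fun i _ => ?_
          rw [norm_smul, Real.norm_eq_abs]
          refine mul_le_mul_of_nonneg_left ?_ (abs_nonneg _)
          obtain ⟨j, hj⟩ := hs i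
          rw [← hj]
          exact Finset.single_le_sum (fun i _ => norm_nonneg (φ₀ i)) (Finset.mem_univ j)
      _ = (∑ i, |l i|) * R := by rw [Finset.sum_mul]
      _ ≤ 1 * R := mul_le_mul_of_nonneg_right hl hR0
      _ = R := one_mul R
  refine ⟨(C + 1).toReal + R, by
    have := ENNReal.toReal_nonneg (a := C + 1); linarith, fun f hf => ?_⟩
  have h1 : EMetric.infEdist f (convComb n (Set.range φ₀)) < C + 1 :=
    lt_of_le_of_lt (le_iSup₂ (f := fun f _ => EMetric.infEdist f (convComb n (Set.range φ₀))) f hf)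
      (ENNReal.lt_add_right hφ₀.ne one_ne_zero)
  obtain ⟨x, hxS, hx⟩ := EMetric.infEdist_lt_iff.mp h1
  have hdist : dist f x ≤ (C + 1).toReal := by
    rw [dist_edist]
    exact ENNReal.toReal_mono (by simp [hφ₀.ne]) hx.le
  calc ‖f‖ = ‖(f - x) + x‖ := by congr 1; abel
    _ ≤ ‖f - x‖ + ‖x‖ := norm_add_le _ _
    _ ≤ (C + 1).toReal + R := add_le_add (by rwa [← dist_eq_norm]) (hbd x hxS)


theorem stmt11 [CompleteSpace X] (K : Set X) (n : ℕ) (h : cwidth n K < ⊤) :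
    cwidth n K = kwidth n K := by
  have easy : kwidth n K ≤ cwidth n K := by
    refine iInf_mono fun φ => iSup_mono fun f => iSup_mono fun _ => ?_
    refine EMetric.infEdist_anti ?_
    rintro x ⟨l, s, hl, hs, rfl⟩
    exact Submodule.sum_mem _ fun i _ => Submodule.smul_mem _ _
      (Submodule.subset_span (hs i))
  refine le_antisymm ?_ easy
  have hk : kwidth n K < ⊤ := lt_of_le_of_lt easy h
  obtain ⟨B, hB0, hB⟩ := K_bounded K h
  refine ENNReal.le_of_forall_pos_le_add fun ε hε _ => ?_
  set D := kwidth n K + ε with hD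
  have hDne : D ≠ ⊤ := by
    simp [hD, hk.ne]
  obtain ⟨φ, hφ⟩ : ∃ φ : Fin n → X,
      (⨆ f ∈ K, EMetric.infEdist f
        ((Submodule.span ℝ (Set.range φ) : Submodule ℝ X) : Set X)) < D := by
    refine iInf_lt_iff.mp ?_
    calc (⨅ φ : Fin n → X, ⨆ f ∈ K, EMetric.infEdist f
        ((Submodule.span ℝ (Set.range φ) : Submodule ℝ X) : Set X)) = kwidth n K := rfl
      _ < D := ENNReal.lt_add_right hk.ne (by exact_mod_cast hε.ne')
  obtain ⟨C, hC0, hC⟩ := coeff_bound φ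
  set B' := B + D.toReal with hB'
  have hB'0 : 0 ≤ B' := add_nonneg hB0 ENNReal.toReal_nonneg
  set M := C * B' + 1 with hM
  have hM0 : 0 < M := by positivity
  set ψ : Fin n → X := fun i => M • φ i with hψ
  calc cwidth n K ≤ ⨆ f ∈ K, EMetric.infEdist f (convComb n (Set.range ψ)) := iInf_le _ ψ
    _ ≤ D := by
      refine iSup₂_le fun f hf => ?_
      have h1 : EMetric.infEdist f
          ((Submodule.span ℝ (Set.range φ) : Submodule ℝ X) : Set X) < D :=
        lt_of_le_of_lt (le_iSup₂ (f := fun f _ => EMetric.infEdist f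
          ((Submodule.span ℝ (Set.range φ) : Submodule ℝ X) : Set X)) f hf) hφ
      obtain ⟨g, hgV, hgd⟩ := EMetric.infEdist_lt_iff.mp h1
      have hdist : dist f g ≤ D.toReal := by
        rw [dist_edist]; exact ENNReal.toReal_mono hDne hgd.le
      have hgnorm : ‖g‖ ≤ B' := by
        calc ‖g‖ = ‖f + (g - f)‖ := by congr 1; abel
          _ ≤ ‖f‖ + ‖g - f‖ := norm_add_le _ _
          _ ≤ B + D.toReal := add_le_add (hB f hf) (by rw [← dist_eq_norm, dist_comm]; exact hdist)
      obtain ⟨μ, hμg, hμsum⟩ := hC g hgV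
      have hgconv : g ∈ convComb n (Set.range ψ) := by
        refine ⟨fun i => μ i / M, ψ, ?_, fun i => ⟨i, rfl⟩, ?_⟩
        · have : (∑ i, |μ i / M|) = (∑ i, |μ i|) / M := by
            rw [Finset.sum_div]
            exact Finset.sum_congr rfl fun i _ => by
              rw [abs_div, abs_of_pos hM0]
          rw [this, div_le_one hM0]
          calc (∑ i, |μ i|) ≤ C * ‖g‖ := hμsum
            _ ≤ C * B' := mul_le_mul_of_nonneg_left hgnorm hC0
            _ ≤ M := by rw [hM]; linarith
        · rw [← hμg]
          exact Finset.sum_congr rfl fun i _ => by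
            rw [hψ, smul_smul, div_mul_cancel₀ _ hM0.ne']
      exact le_trans (EMetric.infEdist_le_edist_of_mem hgconv) hgd.le
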